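/- If γ₁ and γ₂ are F_σ (respectively G_δ) cones in T*U₁ ∖ 0 and T*U₂ ∖ 0, then γ₁ ×̇ γ₂ is F_σ (respectively G_δ) in T*(U₁×U₂) ∖ 0. Consequently, if both γ₁ and γ₂ are simultaneously F_σ and G_δ (Δ₂⁰-cones), so is γ₁ ×̇ γ₂. -/

import Mathlib

open Set

/-- A point of the (trivialized) cotangent space of `ℝ^d`: base point and covector. -/
abbrev Pt (d : ℕ) := (Fin d → ℝ) × (Fin d → ℝ)

/-- The punctured cotangent bundle `T*U ∖ 0` over `U`. -/
def PT {d : ℕ} (U : Set (Fin d → ℝ)) : Set (Pt d) := {p | p.1 ∈ U ∧ p.2 ≠ 0}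

/-- `γ` is a cone: stable under positive scaling of the covector. -/
def IsCone {d : ℕ} (γ : Set (Pt d)) : Prop :=
  ∀ p ∈ γ, ∀ t : ℝ, 0 < t → (p.1, t • p.2) ∈ γ

/-- Zero section over `U`. -/
def zeroSec {d : ℕ} (U : Set (Fin d → ℝ)) : Set (Pt d) := {p | p.1 ∈ U ∧ p.2 = 0}

/-- The dotted product `γ₁ ×̇ γ₂` of two cones, inside `T*(U₁×U₂) ∖ 0 ≅ T*U₁ × T*U₂`. -/
def dotProd {d₁ d₂ : ℕ} (U₁ : Set (Fin d₁ → ℝ)) (U₂ : Set (Fin d₂ → ℝ))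
    (γ₁ : Set (Pt d₁)) (γ₂ : Set (Pt d₂)) : Set (Pt d₁ × Pt d₂) :=
  (γ₁ ×ˢ γ₂) ∪ (γ₁ ×ˢ zeroSec U₂) ∪ (zeroSec U₁ ×ˢ γ₂)

/-- The punctured cotangent bundle of `U₁ × U₂`. -/
def PTprod {d₁ d₂ : ℕ} (U₁ : Set (Fin d₁ → ℝ)) (U₂ : Set (Fin d₂ → ℝ)) :
    Set (Pt d₁ × Pt d₂) :=
  {q | q.1.1 ∈ U₁ ∧ q.2.1 ∈ U₂ ∧ (q.1.2 ≠ 0 ∨ q.2.2 ≠ 0)}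

/-- `s` is closed in the subspace topology of `T` (for `s ⊆ T`). -/
def IsClosedWithin {α : Type*} [TopologicalSpace α] (T s : Set α) : Prop :=
  s ⊆ T ∧ closure s ∩ T ⊆ s

/-- Conic subsets of the product: simultaneous positive scaling of both covectors. -/
def IsConeProd {d₁ d₂ : ℕ} (γ : Set (Pt d₁ × Pt d₂)) : Prop :=
  ∀ q ∈ γ, ∀ t : ℝ, 0 < t → ((q.1.1, t • q.1.2), (q.2.1, t • q.2.2)) ∈ γ

/-- Relative `F_σ`: countable union of relatively closed subsets of `T`. -/
def RelFsigma {α : Type*} [TopologicalSpace α] (T s : Set α) : Prop :=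
  ∃ f : ℕ → Set α, (∀ n, IsClosedWithin T (f n)) ∧ s = ⋃ n, f n

/-- Relative `G_δ`: countable intersection of relatively open subsets of `T`. -/
def RelGdelta {α : Type*} [TopologicalSpace α] (T s : Set α) : Prop :=
  ∃ f : ℕ → Set α, (∀ n, IsOpen (f n)) ∧ s = T ∩ ⋂ n, f n

open Filter Topology

-- existence of m with (m+1)⁻¹ ≤ r ≤ m+1
lemma exists_index (r : ℝ) (hr : 0 < r) :
    ∃ m : ℕ, ((m : ℝ) + 1)⁻¹ ≤ r ∧ r ≤ (m : ℝ) + 1 := by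
  refine ⟨⌈max r r⁻¹⌉₊, ?_, ?_⟩
  · have h : r⁻¹ ≤ (⌈max r r⁻¹⌉₊ : ℝ) + 1 :=
      le_trans (le_trans (le_max_right _ _) (Nat.le_ceil _)) (le_add_of_nonneg_right zero_le_one)
    calc ((⌈max r r⁻¹⌉₊ : ℝ) + 1)⁻¹ ≤ (r⁻¹)⁻¹ := inv_anti₀ (by positivity) h
      _ = r := inv_inv r
  · exact le_trans (le_trans (le_max_left _ _) (Nat.le_ceil _)) (le_add_of_nonneg_right zero_le_one)

lemma fsigma_factor {d : ℕ} (U : Set (Fin d → ℝ)) (γ : Set (Pt d))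
    (h : γ ⊆ PT U) (hc : IsCone γ) (hf : RelFsigma (PT U) γ) :
    ∃ g : ℕ → Set (Pt d), (∀ n, g n ⊆ γ) ∧
      (∀ n, closure (g n) ∩ {p : Pt d | p.1 ∈ U} ⊆ g n) ∧ γ = ⋃ n, g n := by
  obtain ⟨f, hcl, hγ⟩ := hf
  set g : ℕ → Set (Pt d) := fun k =>
    {p : Pt d | ‖p.2‖ ∈ Icc (((k.unpair.2 : ℝ) + 1)⁻¹) ((k.unpair.2 : ℝ) + 1) ∧
      (p.1, ‖p.2‖⁻¹ • p.2) ∈ f k.unpair.1} with hg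
  have hpos : ∀ k : ℕ, (0 : ℝ) < ((k.unpair.2 : ℝ) + 1)⁻¹ := fun k => by positivity
  have hne : ∀ k, ∀ p ∈ g k, p.2 ≠ 0 := by
    intro k p hp h0
    have h1 := hp.1.1
    rw [h0] at h1
    simp at h1
    exact absurd h1 (not_le.2 (by positivity))
  have hsub : ∀ k, g k ⊆ γ := by
    intro k p hp
    have hp2 : p.2 ≠ 0 := hne k p hp
    have hnz : ‖p.2‖ ≠ 0 := by simpa using hp2
    have hmem : (p.1, ‖p.2‖⁻¹ • p.2) ∈ γ := by rw [hγ]; exact mem_iUnion.2 ⟨_, hp.2⟩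
    have := hc _ hmem ‖p.2‖ (by positivity)
    simpa [smul_inv_smul₀ hnz] using this
  refine ⟨g, hsub, ?_, ?_⟩
  · intro k p hp
    obtain ⟨u, hu, hul⟩ := mem_closure_iff_seq_limit.1 hp.1
    have hU : p.1 ∈ U := hp.2
    have hnorm : Tendsto (fun i => ‖(u i).2‖) atTop (𝓝 ‖p.2‖) :=
      ((continuous_snd.norm).tendsto p).comp hul
    have hIcc : ‖p.2‖ ∈ Icc (((k.unpair.2 : ℝ) + 1)⁻¹) ((k.unpair.2 : ℝ) + 1) :=
      isClosed_Icc.mem_of_tendsto hnorm (Eventually.of_forall fun i => (hu i).1)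
    have hp2 : p.2 ≠ 0 := by
      intro h0; rw [h0] at hIcc; simp at hIcc
      exact absurd hIcc.1 (not_le.2 (by positivity))
    have hnz : ‖p.2‖ ≠ 0 := by simpa using hp2
    have hca : ContinuousAt (fun q : Pt d => (q.1, ‖q.2‖⁻¹ • q.2)) p := by
      exact continuousAt_fst.prodMk
        (((continuous_snd.norm).continuousAt.inv₀ hnz).smul continuous_snd.continuousAt)
    have htend : Tendsto (fun i => ((u i).1, ‖(u i).2‖⁻¹ • (u i).2)) atTop
        (𝓝 (p.1, ‖p.2‖⁻¹ • p.2)) := hca.tendsto.comp hul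
    have hmemcl : (p.1, ‖p.2‖⁻¹ • p.2) ∈ closure (f k.unpair.1) :=
      mem_closure_of_tendsto htend (Eventually.of_forall fun i => (hu i).2)
    have : (p.1, ‖p.2‖⁻¹ • p.2) ∈ f k.unpair.1 :=
      (hcl k.unpair.1).2 ⟨hmemcl, hU, by simpa [hnz] using hp2⟩
    exact ⟨hIcc, this⟩
  · apply Subset.antisymm _ (iUnion_subset hsub)
    intro p hp
    have hp2 : p.2 ≠ 0 := (h hp).2
    have hnz : ‖p.2‖ ≠ 0 := by simpa using hp2
    have hmem : (p.1, ‖p.2‖⁻¹ • p.2) ∈ γ := by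
      have := hc _ hp ‖p.2‖⁻¹ (by positivity)
      simpa using this
    rw [hγ] at hmem
    obtain ⟨n, hn⟩ := mem_iUnion.1 hmem
    obtain ⟨m, hm1, hm2⟩ := exists_index ‖p.2‖ (by positivity)
    exact mem_iUnion.2 ⟨Nat.pair n m, by simp [hg, Nat.unpair_pair]; exact ⟨⟨hm1, hm2⟩, hn⟩⟩

lemma gdelta_factor {d : ℕ} (U : Set (Fin d → ℝ)) (γ : Set (Pt d))
    (h : γ ⊆ PT U) (hc : IsCone γ) (hf : RelGdelta (PT U) γ) :
    ∃ O : ℕ → Set (Pt d), (∀ n, IsOpen (O n)) ∧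
      {p : Pt d | p.1 ∈ U ∧ (p.2 = 0 ∨ p ∈ γ)} = {p : Pt d | p.1 ∈ U} ∩ ⋂ n, O n := by
  obtain ⟨V, hVo, hγ⟩ := hf
  set N : Pt d → Pt d := fun p => (p.1, ‖p.2‖⁻¹ • p.2) with hN
  set O : ℕ → Set (Pt d) := fun n =>
    {p : Pt d | ‖p.2‖ < ((n : ℝ) + 1)⁻¹} ∪
      ({p : Pt d | p.2 ≠ 0} ∩ N ⁻¹' (⋂ m ∈ Finset.range (n + 1), V m)) with hO
  have hNmem : ∀ p : Pt d, p.1 ∈ U → p.2 ≠ 0 → N p ∈ PT U := by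
    intro p h1 h2
    exact ⟨h1, by simp [hN]; simpa using h2⟩
  have hNγ : ∀ p : Pt d, p.2 ≠ 0 → N p ∈ γ → p ∈ γ := by
    intro p h2 hm
    have hnz : ‖p.2‖ ≠ 0 := by simpa using h2
    have := hc _ hm ‖p.2‖ (by positivity)
    simpa [hN, smul_inv_smul₀ hnz] using this
  refine ⟨O, ?_, ?_⟩
  · intro n
    apply IsOpen.union
    · exact isOpen_lt (continuous_snd.norm) continuous_const
    · have hopen : IsOpen {p : Pt d | p.2 ≠ 0} := by
        have : IsClosed {p : Pt d | p.2 = 0} :=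
          isClosed_singleton.preimage continuous_snd
        simpa [compl_setOf] using this.isOpen_compl
      have hcont : ContinuousOn N {p : Pt d | p.2 ≠ 0} := by
        apply ContinuousOn.prodMk continuous_fst.continuousOn
        exact (continuous_snd.norm.continuousOn.inv₀
          (fun p hp => by simpa using hp)).smul continuous_snd.continuousOn
      exact hcont.isOpen_inter_preimage hopen
        (isOpen_biInter_finset (fun m _ => hVo m))
  · ext p
    simp only [mem_setOf_eq, mem_inter_iff, mem_iInter]
    constructor
    · rintro ⟨hU, h0 | hγp⟩
      · exact ⟨hU, fun n => Or.inl (by simp [h0]; positivity)⟩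
      · refine ⟨hU, fun n => Or.inr ⟨(h hγp).2, ?_⟩⟩
        have hNγp : N p ∈ γ := by
          have := hc _ hγp ‖p.2‖⁻¹ (by
            have : ‖p.2‖ ≠ 0 := by simpa using (h hγp).2
            positivity)
          simpa [hN] using this
        rw [hγ] at hNγp
        simp only [mem_preimage]
        exact mem_iInter₂.2 fun m _ => mem_iInter.1 hNγp.2 m
    · rintro ⟨hU, hall⟩
      by_cases h0 : p.2 = 0
      · exact ⟨hU, Or.inl h0⟩
      · refine ⟨hU, Or.inr ?_⟩
        apply hNγ p h0
        rw [hγ]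
        refine ⟨hNmem p hU h0, ?_⟩
        apply mem_iInter.2
        intro m
        have hnorm : (0 : ℝ) < ‖p.2‖ := by simpa [norm_pos_iff] using h0
        obtain ⟨j, hj1, _⟩ := exists_index ‖p.2‖ hnorm
        set n := max m j with hn
        have hle : ((n : ℝ) + 1)⁻¹ ≤ ‖p.2‖ := by
          refine le_trans ?_ hj1
          apply inv_anti₀ (by positivity)
          have : (j : ℝ) ≤ n := by exact_mod_cast le_max_right m j
          linarith
        rcases hall n with hlt | ⟨_, hmem⟩
        · exact absurd hlt (not_lt.2 hle)
        · have := mem_iInter₂.1 hmem m (Finset.mem_range.2 (Nat.lt_succ_of_le (le_max_left m j)))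
          exact this

lemma dotProd_subset {d₁ d₂ : ℕ} {U₁ : Set (Fin d₁ → ℝ)} {U₂ : Set (Fin d₂ → ℝ)}
    {γ₁ : Set (Pt d₁)} {γ₂ : Set (Pt d₂)}
    (h₁ : γ₁ ⊆ PT U₁) (h₂ : γ₂ ⊆ PT U₂) :
    dotProd U₁ U₂ γ₁ γ₂ ⊆ PTprod U₁ U₂ := by
  rintro q ((⟨hq1, hq2⟩ | ⟨hq1, hq2⟩) | ⟨hq1, hq2⟩)
  · exact ⟨(h₁ hq1).1, (h₂ hq2).1, Or.inl (h₁ hq1).2⟩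
  · exact ⟨(h₁ hq1).1, hq2.1, Or.inl (h₁ hq1).2⟩
  · exact ⟨hq1.1, (h₂ hq2).1, Or.inr (h₂ hq2).2⟩

lemma closure_zeroSec_snd {d : ℕ} (U : Set (Fin d → ℝ)) :
    closure (zeroSec U) ⊆ {p : Pt d | p.2 = 0} := by
  apply closure_minimal (fun p hp => hp.2)
  exact isClosed_singleton.preimage continuous_snd


/-- the dotted product of `F_σ` (resp. `G_δ`, resp. `Δ₂⁰`) cones is again
`F_σ` (resp. `G_δ`, resp. `Δ₂⁰`) in `T*(U₁×U₂) ∖ 0`. -/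
theorem stmt_3 {d₁ d₂ : ℕ} (U₁ : Set (Fin d₁ → ℝ)) (U₂ : Set (Fin d₂ → ℝ))
    (hU₁ : IsOpen U₁) (hU₂ : IsOpen U₂)
    (γ₁ : Set (Pt d₁)) (γ₂ : Set (Pt d₂))
    (h₁ : γ₁ ⊆ PT U₁) (h₂ : γ₂ ⊆ PT U₂)
    (hc₁ : IsCone γ₁) (hc₂ : IsCone γ₂) :
    (RelFsigma (PT U₁) γ₁ → RelFsigma (PT U₂) γ₂ →
        RelFsigma (PTprod U₁ U₂) (dotProd U₁ U₂ γ₁ γ₂)) ∧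
    (RelGdelta (PT U₁) γ₁ → RelGdelta (PT U₂) γ₂ →
        RelGdelta (PTprod U₁ U₂) (dotProd U₁ U₂ γ₁ γ₂)) ∧
    ((RelFsigma (PT U₁) γ₁ ∧ RelGdelta (PT U₁) γ₁) →
      (RelFsigma (PT U₂) γ₂ ∧ RelGdelta (PT U₂) γ₂) →
        (RelFsigma (PTprod U₁ U₂) (dotProd U₁ U₂ γ₁ γ₂) ∧
          RelGdelta (PTprod U₁ U₂) (dotProd U₁ U₂ γ₁ γ₂))) := by
  have Fpart : RelFsigma (PT U₁) γ₁ → RelFsigma (PT U₂) γ₂ →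
      RelFsigma (PTprod U₁ U₂) (dotProd U₁ U₂ γ₁ γ₂) := by
    intro hf₁ hf₂
    obtain ⟨g₁, hg₁γ, hg₁c, hγ₁⟩ := fsigma_factor U₁ γ₁ h₁ hc₁ hf₁
    obtain ⟨g₂, hg₂γ, hg₂c, hγ₂⟩ := fsigma_factor U₂ γ₂ h₂ hc₂ hf₂
    refine ⟨fun k => (g₁ k.unpair.1 ×ˢ g₂ k.unpair.2) ∪
        (g₁ k.unpair.1 ×ˢ zeroSec U₂) ∪ (zeroSec U₁ ×ˢ g₂ k.unpair.2), ?_, ?_⟩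
    · intro k
      constructor
      · apply subset_trans _ (dotProd_subset h₁ h₂)
        intro q hq
        rcases hq with ((hm | hm) | hm)
        · exact Or.inl (Or.inl ⟨hg₁γ _ hm.1, hg₂γ _ hm.2⟩)
        · exact Or.inl (Or.inr ⟨hg₁γ _ hm.1, hm.2⟩)
        · exact Or.inr ⟨hm.1, hg₂γ _ hm.2⟩
      · rw [closure_union, closure_union]
        rintro q ⟨hclm, hq2⟩
        obtain ⟨hU1, hU2, -⟩ := hq2
        rcases hclm with ((hm | hm) | hm)
        · rw [closure_prod_eq] at hm
          exact Or.inl (Or.inl ⟨hg₁c _ ⟨hm.1, hU1⟩, hg₂c _ ⟨hm.2, hU2⟩⟩)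
        · rw [closure_prod_eq] at hm
          exact Or.inl (Or.inr ⟨hg₁c _ ⟨hm.1, hU1⟩, hU2, closure_zeroSec_snd U₂ hm.2⟩)
        · rw [closure_prod_eq] at hm
          exact Or.inr ⟨⟨hU1, closure_zeroSec_snd U₁ hm.1⟩, hg₂c _ ⟨hm.2, hU2⟩⟩
    · ext q
      simp only [dotProd, mem_union, mem_prod, mem_iUnion, hγ₁, hγ₂]
      constructor
      · rintro ((⟨⟨a, ha⟩, ⟨b, hb⟩⟩ | ⟨⟨a, ha⟩, hb⟩) | ⟨ha, ⟨b, hb⟩⟩)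
        · exact ⟨Nat.pair a b, Or.inl (Or.inl ⟨by simpa [Nat.unpair_pair] using ha,
            by simpa [Nat.unpair_pair] using hb⟩)⟩
        · exact ⟨Nat.pair a 0, Or.inl (Or.inr ⟨by simpa [Nat.unpair_pair] using ha, hb⟩)⟩
        · exact ⟨Nat.pair 0 b, Or.inr ⟨ha, by simpa [Nat.unpair_pair] using hb⟩⟩
      · rintro ⟨k, ((⟨ha, hb⟩ | ⟨ha, hb⟩) | ⟨ha, hb⟩)⟩
        · exact Or.inl (Or.inl ⟨⟨_, ha⟩, ⟨_, hb⟩⟩)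
        · exact Or.inl (Or.inr ⟨⟨_, ha⟩, hb⟩)
        · exact Or.inr ⟨ha, ⟨_, hb⟩⟩
  have Gpart : RelGdelta (PT U₁) γ₁ → RelGdelta (PT U₂) γ₂ →
      RelGdelta (PTprod U₁ U₂) (dotProd U₁ U₂ γ₁ γ₂) := by
    intro hf₁ hf₂
    obtain ⟨O₁, hO₁o, hA₁⟩ := gdelta_factor U₁ γ₁ h₁ hc₁ hf₁
    obtain ⟨O₂, hO₂o, hA₂⟩ := gdelta_factor U₂ γ₂ h₂ hc₂ hf₂
    refine ⟨fun n => (Prod.fst ⁻¹' O₁ n) ∩ (Prod.snd ⁻¹' O₂ n),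
      fun n => ((hO₁o n).preimage continuous_fst).inter ((hO₂o n).preimage continuous_snd), ?_⟩
    have key₁ : ∀ p : Pt d₁, p.1 ∈ U₁ → ((p.2 = 0 ∨ p ∈ γ₁) ↔ ∀ n, p ∈ O₁ n) := by
      intro p hU
      constructor
      · intro hor n
        have hm : p ∈ {p : Pt d₁ | p.1 ∈ U₁} ∩ ⋂ n, O₁ n := by rw [← hA₁]; exact ⟨hU, hor⟩
        exact mem_iInter.1 hm.2 n
      · intro hall
        have hm : p ∈ {p : Pt d₁ | p.1 ∈ U₁ ∧ (p.2 = 0 ∨ p ∈ γ₁)} := by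
          rw [hA₁]; exact ⟨hU, mem_iInter.2 hall⟩
        exact hm.2
    have key₂ : ∀ p : Pt d₂, p.1 ∈ U₂ → ((p.2 = 0 ∨ p ∈ γ₂) ↔ ∀ n, p ∈ O₂ n) := by
      intro p hU
      constructor
      · intro hor n
        have hm : p ∈ {p : Pt d₂ | p.1 ∈ U₂} ∩ ⋂ n, O₂ n := by rw [← hA₂]; exact ⟨hU, hor⟩
        exact mem_iInter.1 hm.2 n
      · intro hall
        have hm : p ∈ {p : Pt d₂ | p.1 ∈ U₂ ∧ (p.2 = 0 ∨ p ∈ γ₂)} := by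
          rw [hA₂]; exact ⟨hU, mem_iInter.2 hall⟩
        exact hm.2
    ext q
    constructor
    · intro hq
      have hPT : q ∈ PTprod U₁ U₂ := dotProd_subset h₁ h₂ hq
      refine ⟨hPT, mem_iInter.2 fun n => ⟨?_, ?_⟩⟩
      · refine (key₁ q.1 hPT.1).1 ?_ n
        rcases hq with ((hm | hm) | hm)
        exacts [Or.inr hm.1, Or.inr hm.1, Or.inl hm.1.2]
      · refine (key₂ q.2 hPT.2.1).1 ?_ n
        rcases hq with ((hm | hm) | hm)
        exacts [Or.inr hm.2, Or.inl hm.2.2, Or.inr hm.2]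
    · rintro ⟨hPT, hI⟩
      obtain ⟨hU1, hU2, hne⟩ := hPT
      have hall := mem_iInter.1 hI
      have hq1 : q.1.2 = 0 ∨ q.1 ∈ γ₁ := (key₁ q.1 hU1).2 fun n => (hall n).1
      have hq2 : q.2.2 = 0 ∨ q.2 ∈ γ₂ := (key₂ q.2 hU2).2 fun n => (hall n).2
      rcases hq1 with h10 | h1γ
      · rcases hq2 with h20 | h2γ
        · exact absurd hne (by simp [h10, h20])
        · exact Or.inr ⟨⟨hU1, h10⟩, h2γ⟩
      · rcases hq2 with h20 | h2γ
        · exact Or.inl (Or.inr ⟨h1γ, hU2, h20⟩)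
        · exact Or.inl (Or.inl ⟨h1γ, h2γ⟩)
  exact ⟨Fpart, Gpart, fun hA hB => ⟨Fpart hA.1 hB.1, Gpart hA.2 hB.2⟩⟩
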